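/- Let C_xx, C_yy ∈ ℝ^{D×D} be symmetric matrices with C_xx positive semidefinite and C_yy positive definite. Let ǔ ∈ ℝ^D be a unit vector (‖ǔ‖₂ = 1) and set λ̌ := (ǔᵀC_xxǔ)/(ǔᵀC_yyǔ). Then ǔ maximizes the ratio uᵀC_xxu/uᵀC_yyu over all unit vectors u (i.e., (uᵀC_xxu)/(uᵀC_yyu) ≤ λ̌ for every unit u) if and only if ǔ maximizes the quadratic form uᵀ(C_xx − λ̌ C_yy)u over all unit vectors u (i.e., uᵀ(C_xx − λ̌ C_yy)u ≤ ǔᵀ(C_xx − λ̌ C_yy)ǔ for every unit u). -/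

import Mathlib

open Matrix

/-- Theorem 2 of the paper: for symmetric `C_xx ⪰ 0` and `C_yy ≻ 0`, a unit vector
`ǔ` with `λ̌ = (ǔᵀC_xxǔ)/(ǔᵀC_yyǔ)` maximizes the Rayleigh ratio
`uᵀC_xxu / uᵀC_yyu` over unit vectors if and only if it maximizes the quadratic
form `uᵀ(C_xx − λ̌ C_yy)u` over unit vectors. -/
theorem dPCA_cPCA_equivalence {D : ℕ}
    (Cxx Cyy : Matrix (Fin D) (Fin D) ℝ)
    (hx : Cxx.PosSemidef) (hy : Cyy.PosDef)
    (u : Fin D → ℝ) (hu : u ⬝ᵥ u = 1)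
    (lam : ℝ) (hlam : lam = (u ⬝ᵥ (Cxx *ᵥ u)) / (u ⬝ᵥ (Cyy *ᵥ u))) :
    (∀ v : Fin D → ℝ, v ⬝ᵥ v = 1 →
        (v ⬝ᵥ (Cxx *ᵥ v)) / (v ⬝ᵥ (Cyy *ᵥ v)) ≤ lam)
    ↔ (∀ v : Fin D → ℝ, v ⬝ᵥ v = 1 →
        v ⬝ᵥ ((Cxx - lam • Cyy) *ᵥ v) ≤ u ⬝ᵥ ((Cxx - lam • Cyy) *ᵥ u)) := by
  have hpos : ∀ v : Fin D → ℝ, v ⬝ᵥ v = 1 → 0 < v ⬝ᵥ (Cyy *ᵥ v) := by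
    intro v hv
    have hne : v ≠ 0 := by
      intro h; rw [h] at hv; simp at hv
    have := hy.dotProduct_mulVec_pos hne
    simpa using this
  have hexp : ∀ v : Fin D → ℝ,
      v ⬝ᵥ ((Cxx - lam • Cyy) *ᵥ v) = v ⬝ᵥ (Cxx *ᵥ v) - lam * (v ⬝ᵥ (Cyy *ᵥ v)) := by
    intro v
    simp [sub_mulVec, smul_mulVec, dotProduct_sub, dotProduct_smul]
  have hzero : u ⬝ᵥ ((Cxx - lam • Cyy) *ᵥ u) = 0 := by
    rw [hexp, hlam, div_mul_cancel₀]
    · ring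
    · exact (hpos u hu).ne'
  constructor
  · intro h v hv
    have h1 := h v hv
    rw [div_le_iff₀ (hpos v hv)] at h1
    rw [hexp, hzero]
    linarith
  · intro h v hv
    have h1 := h v hv
    rw [hexp, hzero] at h1
    rw [div_le_iff₀ (hpos v hv)]
    linarith
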